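/- arXiv:1709.09288 — 2 statements merged into one kernel-verified Lean document; each statement's English description precedes it below -/
import Mathlib

section
/- Let G be an abelian group, let n ≥ k ≥ 1 be integers, let S be a finite multiset (sequence) of elements of G having a sub-multiset S' with max multiplicity h(S') ≤ n and |S'| ≥ n. Let T be a sub-multiset of S of maximal cardinality subject to h(T) ≤ k ≤ |T| and |T| ≤ |S'| - (n - k). Then there exists a sub-multiset T' of S \ T such that |T| + |T'| = |S'| and h(T') ≤ n - k ≤ |T'|. -/
open Multiset

private lemma exists_le_card' {G : Type*} {M : Multiset G} {s : ℕ} (h : s ≤ Multiset.card M) :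
    ∃ T, T ≤ M ∧ Multiset.card T = s := by
  refine ⟨(M.toList.take s : List G), ?_, ?_⟩
  · calc ((M.toList.take s : List G) : Multiset G) ≤ (M.toList : Multiset G) :=
          ((M.toList.take_sublist s).subperm)
      _ = M := M.coe_toList
  · simp [List.length_take, Multiset.length_toList, Nat.min_eq_left h]

theorem stmt6 {G : Type*} [AddCommGroup G] [DecidableEq G] (n k : ℕ) (hk : 1 ≤ k) (hkn : k ≤ n)
    (S S' : Multiset G) (hS' : S' ≤ S)
    (hS'h : ∀ g : G, S'.count g ≤ n) (hS'c : n ≤ Multiset.card S')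
    (T : Multiset G) (hT : T ≤ S)
    (hTh : ∀ g : G, T.count g ≤ k) (hTc : k ≤ Multiset.card T)
    (hTb : Multiset.card T ≤ Multiset.card S' - (n - k))
    (hTmax : ∀ U : Multiset G, U ≤ S → (∀ g : G, U.count g ≤ k) →
      k ≤ Multiset.card U → Multiset.card U ≤ Multiset.card S' - (n - k) →
      Multiset.card U ≤ Multiset.card T) :
    ∃ T' : Multiset G, T' ≤ S - T ∧
      Multiset.card T + Multiset.card T' = Multiset.card S' ∧
      (∀ g : G, T'.count g ≤ n - k) ∧ n - k ≤ Multiset.card T' := by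
  classical
  set C := n - k with hC
  set s := Multiset.card S' - Multiset.card T with hs
  have hcardST : Multiset.card T ≤ Multiset.card S := Multiset.card_le_card hT
  have hcount_sub : ∀ g : G, (S - T).count g = S.count g - T.count g := fun g =>
    Multiset.count_sub g S T
  have hTS : ∀ g : G, T.count g ≤ S.count g := fun g => Multiset.count_le_of_le g hT
  have hS'S : ∀ g : G, S'.count g ≤ S.count g := fun g => Multiset.count_le_of_le g hS'
  have hCle : C ≤ Multiset.card S' := by omega
  have hscard : Multiset.card T + s = Multiset.card S' := by omega
  have hsC : C ≤ s := by omega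
  -- key inequality
  have key : s ≤ ∑ g ∈ S.toFinset, min ((S - T).count g) C := by
    have hsupT : T.toFinset ⊆ S.toFinset := Multiset.toFinset_subset.mpr (Multiset.subset_of_le hT)
    have hsupS' : S'.toFinset ⊆ S.toFinset :=
      Multiset.toFinset_subset.mpr (Multiset.subset_of_le hS')
    have hsumS' : ∑ g ∈ S.toFinset, S'.count g = Multiset.card S' := by
      rw [← Multiset.toFinset_sum_count_eq S']
      exact (Finset.sum_subset hsupS' (fun x _ hx => Multiset.count_eq_zero.mpr
        (fun h => hx (Multiset.mem_toFinset.mpr h)))).symm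
    have hsumT : ∑ g ∈ S.toFinset, T.count g = Multiset.card T := by
      rw [← Multiset.toFinset_sum_count_eq T]
      exact (Finset.sum_subset hsupT (fun x _ hx => Multiset.count_eq_zero.mpr
        (fun h => hx (Multiset.mem_toFinset.mpr h)))).symm
    have hcardS'S : Multiset.card S' ≤ Multiset.card S := Multiset.card_le_card hS'
    rcases eq_or_lt_of_le hTb with heq | hlt
    · -- card T = card S' - C, so s = C
      have hsC' : s = C := by omega
      by_cases hbig : ∃ g ∈ S.toFinset, C ≤ (S - T).count g
      · obtain ⟨g, hg, hgC⟩ := hbig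
        calc s = C := hsC'
          _ = min ((S - T).count g) C := (min_eq_right hgC).symm
          _ ≤ ∑ g ∈ S.toFinset, min ((S - T).count g) C :=
              Finset.single_le_sum (f := fun g => min ((S - T).count g) C)
                (fun _ _ => Nat.zero_le _) hg
      · push_neg at hbig
        have hsup : (S - T).toFinset ⊆ S.toFinset :=
          Multiset.toFinset_subset.mpr (Multiset.subset_of_le (Multiset.sub_le_self S T))
        have h1 : ∑ g ∈ S.toFinset, (S - T).count g = Multiset.card (S - T) := by
          rw [← Multiset.toFinset_sum_count_eq (S - T)]
          exact (Finset.sum_subset hsup (fun x _ hx => Multiset.count_eq_zero.mpr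
            (fun h => hx (Multiset.mem_toFinset.mpr h)))).symm
        have h2 : ∑ g ∈ S.toFinset, min ((S - T).count g) C
            = ∑ g ∈ S.toFinset, (S - T).count g :=
          Finset.sum_congr rfl (fun g hg => min_eq_left (le_of_lt (hbig g hg)))
        rw [h2, h1, Multiset.card_sub hT]
        omega
    · -- card T < card S' - C : maximality
      have hmax : ∀ g : G, 0 < (S - T).count g → T.count g = k := by
        intro g hg
        by_contra hne
        have hTgk : T.count g < k := lt_of_le_of_ne (hTh g) hne
        have hgS : T.count g < S.count g := by
          have := hcount_sub g; omega
        have hU : (g ::ₘ T) ≤ S := by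
          rw [Multiset.le_iff_count]
          intro a
          rw [Multiset.count_cons]
          by_cases ha : a = g
          · subst ha; simpa using hgS
          · simpa [ha] using hTS a
        have hUh : ∀ a : G, (g ::ₘ T).count a ≤ k := by
          intro a
          rw [Multiset.count_cons]
          by_cases ha : a = g
          · subst ha; simpa using hTgk
          · simpa [ha] using hTh a
        have := hTmax (g ::ₘ T) hU hUh (by simp; omega) (by simp; omega)
        simp at this
    -- per-element bound
      have hper : ∀ g ∈ S.toFinset, S'.count g ≤ T.count g + min ((S - T).count g) C := by
        intro g _
        by_cases hg : (S - T).count g = 0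
        · have h1 := hS'S g
          have h2 := hcount_sub g
          have h3 := hTS g
          simp [hg]; omega
        · have hTg : T.count g = k := hmax g (Nat.pos_of_ne_zero hg)
          have h1 := hS'h g
          have h2 := hS'S g
          have h3 := hcount_sub g
          have h4 := hTS g
          omega
      calc s ≤ (∑ g ∈ S.toFinset, S'.count g) - Multiset.card T := by rw [hsumS']
        _ ≤ (∑ g ∈ S.toFinset, (T.count g + min ((S - T).count g) C)) - Multiset.card T :=
            Nat.sub_le_sub_right (Finset.sum_le_sum hper) _
        _ = ∑ g ∈ S.toFinset, min ((S - T).count g) C := by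
            rw [Finset.sum_add_distrib, hsumT]; omega
  -- greedy construction
  set N : Multiset G := ∑ g ∈ S.toFinset, Multiset.replicate (min ((S - T).count g) C) g with hN
  have hNcount : ∀ a : G, N.count a = if a ∈ S.toFinset then min ((S - T).count a) C else 0 := by
    intro a
    rw [hN, Multiset.count_sum']
    by_cases ha : a ∈ S.toFinset
    · rw [if_pos ha, Finset.sum_eq_single a
        (fun b _ hb => by rw [Multiset.count_replicate, if_neg hb])
        (fun h => absurd ha h)]
      rw [Multiset.count_replicate, if_pos rfl]
    · rw [if_neg ha]
      exact Finset.sum_eq_zero (fun b hb => by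
        rw [Multiset.count_replicate, if_neg (fun h : b = a => ha (h ▸ hb))])
  have hNle : N ≤ S - T := by
    rw [Multiset.le_iff_count]
    intro a
    rw [hNcount a]
    split <;> simp [min_le_left]
  have hNcard : Multiset.card N = ∑ g ∈ S.toFinset, min ((S - T).count g) C := by
    have hgen : ∀ (F : Finset G) (f : G → Multiset G),
        Multiset.card (∑ g ∈ F, f g) = ∑ g ∈ F, Multiset.card (f g) := by
      intro F f
      induction F using Finset.induction with
      | empty => simp
      | insert _ _ h ih => simp [Finset.sum_insert h, ih]
    rw [hN, hgen]
    exact Finset.sum_congr rfl (fun g _ => Multiset.card_replicate _ _)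
  obtain ⟨T', hT'N, hT'card⟩ := exists_le_card' (M := N) (s := s) (by rw [hNcard]; exact key)
  refine ⟨T', le_trans hT'N hNle, by omega, ?_, by omega⟩
  intro g
  calc T'.count g ≤ N.count g := Multiset.count_le_of_le g hT'N
    _ ≤ C := by rw [hNcount g]; split <;> simp [min_le_right]
end

section
/- Let G be an abelian group, let n ≥ 1, and let S be a finite multiset of elements of G. Then there exists a setpartition A_1, ..., A_n of S into n nonempty subsets (i.e., nonempty finite sets A_i ⊆ G whose disjoint union as multisets equals S) if and only if h(S) ≤ n ≤ |S|. -/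
lemma sum_singleton_get {G : Type*} [DecidableEq G] :
    ∀ l : List G, (∑ i : Fin l.length, ({l.get i} : Multiset G)) = (l : Multiset G)
  | [] => by simp
  | a :: l => by
    have ih := sum_singleton_get l
    simp only [List.length_cons]
    rw [Fin.sum_univ_succ]
    simp at ih ⊢
    simp [ih]

lemma card_finset_sum {G ι : Type*} (s : Finset ι) (f : ι → Multiset G) :
    Multiset.card (∑ i ∈ s, f i) = ∑ i ∈ s, Multiset.card (f i) := by
  classical
  induction s using Finset.induction with
  | empty => simp
  | insert _ _ h ih => simp [Finset.sum_insert h, ih]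

lemma aux_exists {G : Type*} [DecidableEq G] (n : ℕ) (hn : 1 ≤ n) (S : Multiset G)
    (hc : ∀ g : G, S.count g ≤ n) (hcard : n ≤ Multiset.card S) :
    ∃ A : Fin n → Finset G, (∀ i, (A i).Nonempty) ∧ (∑ i, (A i).val) = S := by
  induction S using Multiset.strongInductionOn with
  | ih S ih =>
  rcases eq_or_lt_of_le hcard with heq | hlt
  · -- card S = n
    have hlen : n = S.toList.length := by simpa using heq
    refine ⟨fun i => {S.toList.get (Fin.cast hlen i)}, fun i => Finset.singleton_nonempty _, ?_⟩
    calc (∑ i : Fin n, ({S.toList.get (Fin.cast hlen i)} : Finset G).val)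
        = ∑ i : Fin S.toList.length, ({S.toList.get i} : Multiset G) :=
          Fintype.sum_equiv (finCongr hlen) _ _ (fun i => rfl)
      _ = (S.toList : Multiset G) := sum_singleton_get _
      _ = S := S.coe_toList
  · -- n < card S
    have hSne : S ≠ 0 := Multiset.card_pos.mp (by omega)
    obtain ⟨g, hg⟩ := Multiset.exists_mem_of_ne_zero hSne
    set S' := S.erase g with hS'
    have hlt' : S' < S := Multiset.erase_lt.mpr hg
    have hc' : ∀ g' : G, S'.count g' ≤ n := fun g' =>
      le_trans (Multiset.count_le_of_le _ (Multiset.erase_le g S)) (hc g')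
    have hcard' : n ≤ Multiset.card S' := by
      rw [hS', Multiset.card_erase_of_mem hg, Nat.pred_eq_sub_one]
      omega
    obtain ⟨A, hA, hsum⟩ := ih S' hlt' hc' hcard'
    have hcg : S'.count g < n := by
      rw [hS', Multiset.count_erase_self]
      have h1 : 1 ≤ S.count g := Multiset.one_le_count_iff_mem.mpr hg
      have := hc g
      omega
    have hex : ∃ i, g ∉ A i := by
      by_contra h
      push_neg at h
      have : (n : ℕ) ≤ ∑ i : Fin n, (A i).val.count g := by
        calc (n : ℕ) = ∑ _i : Fin n, 1 := by simp
          _ ≤ ∑ i : Fin n, (A i).val.count g :=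
            Finset.sum_le_sum fun i _ => Multiset.one_le_count_iff_mem.mpr (h i)
      rw [← Multiset.count_sum', hsum] at this
      omega
    obtain ⟨i, hi⟩ := hex
    refine ⟨Function.update A i (insert g (A i)), ?_, ?_⟩
    · intro j
      rcases eq_or_ne j i with rfl | hji
      · simp [Finset.insert_nonempty]
      · rw [Function.update_of_ne hji]; exact hA j
    · rw [show (∑ j : Fin n, (Function.update A i (insert g (A i)) j).val)
          = ∑ j : Fin n, Function.update (fun j => (A j).val) i (insert g (A i)).val j from
        Finset.sum_congr rfl (fun j _ => Function.apply_update (fun _ s => s.val) A i _ j)]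
      rw [Finset.sum_update_of_mem (Finset.mem_univ i)]
      rw [Finset.insert_val_of_notMem hi]
      have hrest : (∑ j ∈ Finset.univ \ {i}, (A j).val) + (A i).val = S' := by
        rw [← hsum, ← Finset.sum_eq_sum_sdiff_singleton_add (Finset.mem_univ i)]
      calc g ::ₘ (A i).val + ∑ j ∈ Finset.univ \ {i}, (A j).val
          = g ::ₘ ((∑ j ∈ Finset.univ \ {i}, (A j).val) + (A i).val) := by
            rw [Multiset.cons_add, add_comm ((A i).val)]
        _ = g ::ₘ S' := by rw [hrest]
        _ = S := Multiset.cons_erase hg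

theorem stmt7 {G : Type*} [AddCommGroup G] [DecidableEq G] (n : ℕ) (hn : 1 ≤ n)
    (S : Multiset G) :
    (∃ A : Fin n → Finset G, (∀ i, (A i).Nonempty) ∧ (∑ i, (A i).val) = S) ↔
      ((∀ g : G, S.count g ≤ n) ∧ n ≤ Multiset.card S) := by
  constructor
  · rintro ⟨A, hA, rfl⟩
    constructor
    · intro g
      rw [Multiset.count_sum']
      calc (∑ i : Fin n, (A i).val.count g) ≤ ∑ _i : Fin n, 1 :=
            Finset.sum_le_sum fun i _ =>
              Multiset.nodup_iff_count_le_one.mp (A i).nodup g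
        _ = n := by simp
    · rw [card_finset_sum]
      calc (n : ℕ) = ∑ _i : Fin n, 1 := by simp
        _ ≤ ∑ i : Fin n, Multiset.card (A i).val :=
          Finset.sum_le_sum fun i _ => Multiset.card_pos.mpr
            (by simpa using (hA i).ne_empty ∘ Finset.val_eq_zero.mp)
  · rintro ⟨hc, hcard⟩
    exact aux_exists n hn S hc hcard
end
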